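/- Let X and H be real Hilbert spaces and let ι : X → H be an injective continuous linear map. Let (e_j)_{j≥1} be a sequence in X and (μ_j)_{j≥1} a nondecreasing sequence of real numbers with μ_j ≥ 1, such that: (a) ⟨ι e_i, ι e_j⟩_H = δ_{ij} for all i,j; (b) ⟨e_j, v⟩_X = μ_j ⟨ι e_j, ι v⟩_H for all v ∈ X and all j; (c) the linear span of {e_j : j ≥ 1} is dense in X; (d) the linear span of {ι e_j : j ≥ 1} is dense in H. Fix M ∈ ℕ, define P : H → H by P h = Σ_{i=1}^M ⟨h, ι e_i⟩_H ι e_i and f : X → ℝ by f(u) = (1/2)‖u‖_X² − ‖ι u − P(ι u)‖_H. Then f(u) ≥ −1/(2 μ_{M+1}) for every u ∈ X, and equality holds at u = ± μ_{M+1}^{-1} e_{M+1}; in particular min_{u ∈ X} f(u) = −1/(2 μ_{M+1}). -/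

import Mathlib

open scoped RealInnerProductSpace
open Filter

/-- abstract Auchmuty Principle: let `ι : X → H` be an injective
continuous linear map between real Hilbert spaces, `(e j)_{j∈ℕ}` a sequence in `X` and
`(μ j)_{j∈ℕ}` a nondecreasing sequence of reals with `μ j ≥ 1` such that the `ι (e j)`
are orthonormal in `H`, each `e j` is an eigenvector of the variational problem
`⟪u, v⟫_X = μ ⟪ι u, ι v⟫_H` with eigenvalue `μ j`, the span of the `e j` is dense in `X`
and the span of the `ι (e j)` is dense in `H`. With
`P h = Σ_{i<M} ⟪h, ι e_i⟫ ι e_i` and `f(u) = (1/2)‖u‖² − ‖ι u − P(ι u)‖`, one has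
`f(u) ≥ −1/(2 μ_{M+1})` for all `u`, with equality at `u = ± μ_{M+1}⁻¹ • e_{M+1}`
(here `e 0, e 1, …` enumerate `e_1, e_2, …`, so `e_{M+1}` is `e M`). -/
theorem stmt_12 {X H : Type*}
    [NormedAddCommGroup X] [InnerProductSpace ℝ X] [CompleteSpace X]
    [NormedAddCommGroup H] [InnerProductSpace ℝ H] [CompleteSpace H]
    (ι : X →L[ℝ] H) (hinj : Function.Injective ι)
    (e : ℕ → X) (μ : ℕ → ℝ) (hmono : Monotone μ) (hμ : ∀ j, 1 ≤ μ j)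
    (horth : ∀ i j : ℕ, ⟪ι (e i), ι (e j)⟫ = if i = j then (1 : ℝ) else 0)
    (heig : ∀ (j : ℕ) (v : X), ⟪e j, v⟫ = μ j * ⟪ι (e j), ι v⟫)
    (hdenseX : Dense ((Submodule.span ℝ (Set.range e) : Submodule ℝ X) : Set X))
    (hdenseH : Dense ((Submodule.span ℝ (Set.range fun j => ι (e j)) :
      Submodule ℝ H) : Set H))
    (M : ℕ) (P : H → H)
    (hP : ∀ h : H, P h = ∑ i ∈ Finset.range M, ⟪h, ι (e i)⟫ • ι (e i))
    (f : X → ℝ) (hf : ∀ u : X, f u = (1 / 2) * ‖u‖ ^ 2 - ‖ι u - P (ι u)‖) :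
    (∀ u : X, -(1 / (2 * μ M)) ≤ f u) ∧
      f ((μ M)⁻¹ • e M) = -(1 / (2 * μ M)) ∧
      f (-((μ M)⁻¹ • e M)) = -(1 / (2 * μ M)) := by
  classical
  have hμpos : ∀ j, 0 < μ j := fun j => lt_of_lt_of_le one_pos (hμ j)
  have hee : ∀ i j : ℕ, ⟪e i, e j⟫ = if i = j then μ i else 0 := by
    intro i j
    rw [heig, horth]
    split <;> ring
  -- key inequality
  have key : ∀ u : X, ‖ι u - P (ι u)‖ ^ 2 * μ M ≤ ‖u‖ ^ 2 := by
    intro u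
    have hsqrt_pos : ∀ j, 0 < Real.sqrt (μ j) := fun j => Real.sqrt_pos.mpr (hμpos j)
    set c : ℕ → X := fun j => (Real.sqrt (μ j))⁻¹ • e j with hc
    have hcc : Orthonormal ℝ c := by
      rw [orthonormal_iff_ite]
      intro i j
      simp only [hc, real_inner_smul_left, real_inner_smul_right, hee]
      split
      · rename_i h
        subst h
        rw [← mul_assoc, ← mul_inv, Real.mul_self_sqrt (hμpos i).le,
          inv_mul_cancel₀ (hμpos i).ne']
      · ring
    have hspan_c : Submodule.span ℝ (Set.range c) = Submodule.span ℝ (Set.range e) := by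
      apply le_antisymm
      · rw [Submodule.span_le]
        rintro - ⟨j, rfl⟩
        exact Submodule.smul_mem _ _ (Submodule.subset_span ⟨j, rfl⟩)
      · rw [Submodule.span_le]
        rintro - ⟨j, rfl⟩
        have hej : e j = Real.sqrt (μ j) • c j := by
          simp [hc, smul_smul, mul_inv_cancel₀ (hsqrt_pos j).ne']
        rw [hej]
        exact Submodule.smul_mem _ _ (Submodule.subset_span ⟨j, rfl⟩)
    have hcX : ⊤ ≤ (Submodule.span ℝ (Set.range c)).topologicalClosure := by
      rw [hspan_c]
      exact le_of_eq (Submodule.dense_iff_topologicalClosure_eq_top.mp hdenseX).symm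
    have hbH : Orthonormal ℝ (fun j => ι (e j)) := by
      rw [orthonormal_iff_ite]; exact horth
    have hbHsp : ⊤ ≤ (Submodule.span ℝ (Set.range fun j => ι (e j))).topologicalClosure :=
      le_of_eq (Submodule.dense_iff_topologicalClosure_eq_top.mp hdenseH).symm
    set a : ℕ → ℝ := fun j => ⟪ι (e j), ι u⟫ with ha
    -- Parseval in X
    have h1 : HasSum (fun j => μ j * a j ^ 2) (‖u‖ ^ 2) := by
      have h := (HilbertBasis.mk hcc hcX).hasSum_inner_mul_inner u u
      have hbc : ∀ i, (HilbertBasis.mk hcc hcX) i = c i :=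
        fun i => congrFun (HilbertBasis.coe_mk hcc hcX) i
      rw [real_inner_self_eq_norm_sq] at h
      have hcj : ∀ j, ⟪c j, u⟫ = (Real.sqrt (μ j))⁻¹ * (μ j * a j) := by
        intro j
        rw [hc]
        simp only [real_inner_smul_left]
        rw [heig]
      have hcj' : ∀ j, ⟪u, c j⟫ = (Real.sqrt (μ j))⁻¹ * (μ j * a j) := by
        intro j
        rw [real_inner_comm, hcj]
      have hval : ∀ j, ((Real.sqrt (μ j))⁻¹ * (μ j * a j)) * ((Real.sqrt (μ j))⁻¹ * (μ j * a j))
          = μ j * a j ^ 2 := by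
        intro j
        rw [show ((Real.sqrt (μ j))⁻¹ * (μ j * a j)) * ((Real.sqrt (μ j))⁻¹ * (μ j * a j))
            = ((Real.sqrt (μ j))⁻¹ * (Real.sqrt (μ j))⁻¹) * (μ j * (μ j * (a j * a j)))
            from by ring,
          ← mul_inv, Real.mul_self_sqrt (hμpos j).le, ← mul_assoc,
          inv_mul_cancel₀ (hμpos j).ne', one_mul]
        ring
      simp only [hbc, hcj, hcj', hval] at h
      exact h
    -- Parseval in H for w := ι u - P (ι u)
    set w : H := ι u - P (ι u) with hw
    have h2 : HasSum (fun j => if j < M then (0 : ℝ) else a j ^ 2) (‖w‖ ^ 2) := by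
      have h := (HilbertBasis.mk hbH hbHsp).hasSum_inner_mul_inner w w
      have hbc : ∀ i, (HilbertBasis.mk hbH hbHsp) i = ι (e i) :=
        fun i => congrFun (HilbertBasis.coe_mk hbH hbHsp) i
      rw [real_inner_self_eq_norm_sq] at h
      have hwj : ∀ j, ⟪w, ι (e j)⟫ = if j < M then (0 : ℝ) else a j := by
        intro j
        rw [hw, hP, inner_sub_left, sum_inner]
        simp only [real_inner_smul_left]
        have hsum : ∑ i ∈ Finset.range M, ⟪ι u, ι (e i)⟫ * ⟪ι (e i), ι (e j)⟫
            = if j < M then a j else 0 := by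
          rw [Finset.sum_congr rfl (fun i _ => by rw [horth])]
          simp only [mul_ite, mul_one, mul_zero]
          rw [Finset.sum_ite_eq' (Finset.range M) j (fun i => ⟪ι u, ι (e i)⟫)]
          simp only [Finset.mem_range]
          split <;> [rw [real_inner_comm]; rfl]
        rw [hsum, real_inner_comm]
        split <;> simp [ha]
      have hwj' : ∀ j, ⟪ι (e j), w⟫ = if j < M then (0 : ℝ) else a j := by
        intro j
        rw [real_inner_comm]
        exact hwj j
      have hval : ∀ j, (if j < M then (0 : ℝ) else a j) * (if j < M then (0 : ℝ) else a j)
          = if j < M then (0 : ℝ) else a j ^ 2 := by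
        intro j
        split <;> ring
      simp only [hbc, hwj, hwj', hval] at h
      exact h
    -- comparison
    have h3 : HasSum (fun j => μ j * a j ^ 2 / μ M) (‖u‖ ^ 2 / μ M) := h1.div_const _
    have hle : ‖w‖ ^ 2 ≤ ‖u‖ ^ 2 / μ M := by
      refine hasSum_le (fun j => ?_) h2 h3
      split
      · have h01 := hμpos j
        have h02 := hμpos M
        positivity
      · rename_i hj
        have hMj : μ M ≤ μ j := hmono (not_lt.mp hj)
        rw [le_div_iff₀ (hμpos M)]
        nlinarith [sq_nonneg (a j)]
    rw [← le_div_iff₀ (hμpos M)]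
    exact hle
  have hnorm1 : ‖ι (e M)‖ = 1 := by
    have h2 : ‖ι (e M)‖ ^ 2 = 1 := by
      rw [← real_inner_self_eq_norm_sq, horth]; simp
    nlinarith [norm_nonneg (ι (e M))]
  have hnu : ‖(μ M)⁻¹ • e M‖ ^ 2 = (μ M)⁻¹ := by
    rw [← real_inner_self_eq_norm_sq, real_inner_smul_left, real_inner_smul_right, hee]
    rw [if_pos rfl]
    field_simp
  have hnw : ‖(μ M)⁻¹ • ι (e M)‖ = (μ M)⁻¹ := by
    rw [norm_smul, hnorm1, Real.norm_eq_abs, abs_of_pos (inv_pos.mpr (hμpos M)), mul_one]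
  have hPz : P ((μ M)⁻¹ • ι (e M)) = 0 := by
    rw [hP]
    apply Finset.sum_eq_zero
    intro i hi
    have hne : M ≠ i := fun h => by simp [← h] at hi
    rw [real_inner_smul_left, horth, if_neg hne]
    simp
  have hPz' : P (-((μ M)⁻¹ • ι (e M))) = 0 := by
    rw [hP]
    apply Finset.sum_eq_zero
    intro i hi
    have hne : M ≠ i := fun h => by simp [← h] at hi
    rw [inner_neg_left, real_inner_smul_left, horth, if_neg hne]
    simp
  refine ⟨?_, ?_, ?_⟩
  · intro u
    rw [hf]
    set t := ‖u‖
    set s := ‖ι u - P (ι u)‖ with hsdef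
    have hs : 0 ≤ s := norm_nonneg _
    have hk : s ^ 2 * μ M ≤ t ^ 2 := key u
    have hMpos : (0 : ℝ) < μ M := hμpos M
    have h2 : 0 ≤ μ M * t ^ 2 - 2 * μ M * s + 1 := by
      nlinarith [sq_nonneg (μ M * s - 1), mul_le_mul_of_nonneg_left hk hMpos.le]
    have h3 : (1 / 2) * t ^ 2 - s + 1 / (2 * μ M)
        = (μ M * t ^ 2 - 2 * μ M * s + 1) / (2 * μ M) := by
      field_simp
    have hkey : 0 ≤ (1 / 2) * t ^ 2 - s + 1 / (2 * μ M) := by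
      rw [h3]
      exact div_nonneg h2 (by linarith)
    linarith
  · rw [hf]
    have hι : ι ((μ M)⁻¹ • e M) = (μ M)⁻¹ • ι (e M) := map_smul ι _ _
    rw [hι, hPz, sub_zero, hnw, hnu]
    have := (hμpos M).ne'
    field_simp
    ring
  · rw [hf]
    have hι : ι (-((μ M)⁻¹ • e M)) = -((μ M)⁻¹ • ι (e M)) := by
      rw [map_neg, map_smul]
    rw [hι, hPz', sub_zero, norm_neg, norm_neg, hnw, hnu]
    have := (hμpos M).ne'
    field_simp
    ring
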